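/- Suppose lb^s_i + lb^s_j < L^s for both s ∈ {x,y}. Let P be the polytope of points (c,ℓ,u) ∈ ℝ^8 × [0,1]^4 satisfying the linear relaxation of the unary formulation: for all s ∈ {x,y} and both orderings {p,q} = {i,j}: (1/2)ℓ^s_p + lb^s_q·u^s_{q,p} ≤ c^s_p ≤ L^s − (1/2)ℓ^s_p − lb^s_q·u^s_{p,q}; c^s_p + (1/2)ℓ^s_p ≤ c^s_q − (1/2)ℓ^s_q + L^s(1 − u^s_{p,q}); ℓ^s_p ≥ lb^s_p; u^x_{i,j} + u^x_{j,i} + u^y_{i,j} + u^y_{j,i} = 1; and 0 ≤ u^s_{p,q} ≤ 1. Then every extreme point of P has u ∈ {0,1}^4; that is, the unary formulation is ideal. -/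

import Mathlib

/-!  Direction index: `0 = x`, `1 = y`.  Box index: `0 = i`, `1 = j`. -/

/-- Pairwise layout data, indexed by direction `s : Fin 2` and box `k : Fin 2`. -/
abbrev Vec2 := Fin 2 → Fin 2 → ℝ

/-- Box `p` precedes box `q` in direction `s`. -/
def pre (c l : Vec2) (s p q : Fin 2) : Prop :=
  c s p + l s p / 2 ≤ c s q - l s q / 2

/-- Box `p` does not precede box `q` in direction `s`. -/
def npre (c l : Vec2) (s p q : Fin 2) : Prop :=
  c s q - l s q / 2 ≤ c s p + l s p / 2

/-- Stay-on-the-floor constraints. -/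
def sitb (L : Fin 2 → ℝ) (c l : Vec2) : Prop :=
  ∀ s k, l s k / 2 ≤ c s k ∧ c s k ≤ L s - l s k / 2

/-- The four-branch non-overlap disjunction `D⁴`. -/
def D4 (c l : Vec2) : Prop :=
  pre c l 1 0 1 ∨ pre c l 0 0 1 ∨ pre c l 1 1 0 ∨ pre c l 0 1 0

/-- The eight branches of the refined disjunction `D⁸`. -/
def br (c l : Vec2) : Fin 8 → Prop :=
  ![pre c l 1 0 1 ∧ npre c l 0 0 1 ∧ npre c l 0 1 0,
    pre c l 1 0 1 ∧ pre c l 0 0 1,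
    pre c l 0 0 1 ∧ npre c l 1 0 1 ∧ npre c l 1 1 0,
    pre c l 0 0 1 ∧ pre c l 1 1 0,
    pre c l 1 1 0 ∧ npre c l 0 0 1 ∧ npre c l 0 1 0,
    pre c l 0 1 0 ∧ pre c l 1 1 0,
    pre c l 0 1 0 ∧ npre c l 1 0 1 ∧ npre c l 1 1 0,
    pre c l 0 1 0 ∧ pre c l 1 0 1]

/-- The refined disjunction `D⁸`. -/
def D8 (c l : Vec2) : Prop := ∃ k, br c l k

/-- The 0/1 code whose only `1` is in coordinate `(s, p)`; coordinate `(s, p)` stands for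
the variable attached to "box `p` precedes the other box in direction `s`". -/
def uCode (s p : Fin 2) : Vec2 := fun s' p' => if s' = s ∧ p' = p then 1 else 0

/-- The codes of the encoding `C⁸` for the eight branches of `D⁸`. -/
def c8code : Fin 8 → Vec2 :=
  ![uCode 1 0, uCode 1 0 + uCode 0 0, uCode 0 0, uCode 0 0 + uCode 1 1,
    uCode 1 1, uCode 1 1 + uCode 0 1, uCode 0 1, uCode 0 1 + uCode 1 0]

/-- `Q^lb`: stay-on-the-floor plus lower bounds on widths. -/
def Qlb (L : Fin 2 → ℝ) (lb : Fin 2 → Fin 2 → ℝ) (c l : Vec2) : Prop :=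
  sitb L c l ∧ ∀ s k, lb s k ≤ l s k

/-- `Q^ub`: stay-on-the-floor plus lower and upper bounds on widths. -/
def Qub (L : Fin 2 → ℝ) (lb ub : Fin 2 → Fin 2 → ℝ) (c l : Vec2) : Prop :=
  sitb L c l ∧ ∀ s k, lb s k ≤ l s k ∧ l s k ≤ ub s k

/-- `Q^FLP`: stay-on-the-floor, width bounds, and area constraints. -/
def QFLP (L : Fin 2 → ℝ) (lb ub : Fin 2 → Fin 2 → ℝ) (A : Fin 2 → ℝ) (c l : Vec2) : Prop :=
  Qub L lb ub c l ∧ ∀ k, A k ≤ l 0 k * l 1 k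

/-- Embedding of `Q` with disjunction `D⁴` and the unary encoding `U⁴`. -/
def EmU4 (Q : Vec2 → Vec2 → Prop) (c l u : Vec2) : Prop :=
  ∃ s p : Fin 2, Q c l ∧ pre c l s p (1 - p) ∧ u = uCode s p

/-- Embedding of `Q` with disjunction `D⁸` and encoding `C⁸`. -/
def EmC8 (Q : Vec2 → Vec2 → Prop) (c l z : Vec2) : Prop :=
  ∃ k : Fin 8, Q c l ∧ br c l k ∧ z = c8code k

/-- Embedding of `Q` with disjunction `D⁴` and the Gray encoding `GB⁴`. -/
def EmGB4 (Q : Vec2 → Vec2 → Prop) (c l : Vec2) (w : Fin 2 → ℝ) : Prop :=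
  (Q c l ∧ pre c l 1 0 1 ∧ w = ![0, 0]) ∨
  (Q c l ∧ pre c l 0 0 1 ∧ w = ![1, 0]) ∨
  (Q c l ∧ pre c l 1 1 0 ∧ w = ![1, 1]) ∨
  (Q c l ∧ pre c l 0 1 0 ∧ w = ![0, 1])

/-- Dot product of two coefficient vectors indexed by `(s, k)`. -/
def dotp (a x : Vec2) : ℝ := ∑ s, ∑ k, a s k * x s k

/-- The unary formulation (with binary `u`). -/
def Uform (L : Fin 2 → ℝ) (lb : Fin 2 → Fin 2 → ℝ) (c l u : Vec2) : Prop :=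
  (∀ s p, u s p = 0 ∨ u s p = 1) ∧
  (∀ s p, l s p / 2 + lb s (1 - p) * u s (1 - p) ≤ c s p ∧
      c s p ≤ L s - l s p / 2 - lb s (1 - p) * u s p) ∧
  (∀ s p, c s p + l s p / 2 ≤ c s (1 - p) - l s (1 - p) / 2 + L s * (1 - u s p)) ∧
  (∀ s p, lb s p ≤ l s p) ∧
  u 0 0 + u 0 1 + u 1 0 + u 1 1 = 1

/-- The refined unary formulation (with binary `z`). -/
def RUform (L : Fin 2 → ℝ) (lb : Fin 2 → Fin 2 → ℝ) (c l z : Vec2) : Prop :=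
  (∀ s p, z s p = 0 ∨ z s p = 1) ∧
  (∀ s p, l s p / 2 + lb s (1 - p) * z s (1 - p) ≤ c s p ∧
      c s p ≤ L s - l s p / 2 - lb s (1 - p) * z s p) ∧
  (∀ s p, c s p + l s p / 2 ≤ c s (1 - p) - l s (1 - p) / 2 + L s * (1 - z s p)) ∧
  (∀ s p, lb s p ≤ l s p) ∧
  (∀ s p, c s (1 - p) - l s (1 - p) / 2 + (lb s 0 + lb s 1) * (z s 0 + z s 1) ≤
      c s p + l s p / 2 + L s * z s p) ∧
  1 ≤ z 0 0 + z 0 1 + z 1 0 + z 1 1 ∧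
  (∀ s, z s 0 + z s 1 ≤ 1)

/-- `Q^obj`: `Q^lb` augmented with the objective-linearization variables `dv`. -/
def Qobj (L : Fin 2 → ℝ) (lb : Fin 2 → Fin 2 → ℝ) (c l : Vec2) (dv : Fin 2 → ℝ) : Prop :=
  Qlb L lb c l ∧ ∀ s, c s 0 - c s 1 ≤ dv s ∧ c s 1 - c s 0 ≤ dv s

/-- Embedding of `Q^obj` with disjunction `D⁸` and encoding `C⁸`. -/
def EmC8obj (L : Fin 2 → ℝ) (lb : Fin 2 → Fin 2 → ℝ) (c l : Vec2) (dv : Fin 2 → ℝ)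
    (z : Vec2) : Prop :=
  ∃ k : Fin 8, Qobj L lb c l dv ∧ br c l k ∧ z = c8code k

/-- The affine map `𝒜^GB` translating Gray codes to `C⁸`-style codes. -/
def AGB (w : Fin 2 → ℝ) : Vec2 :=
  fun s p =>
    if s = 1 then (if p = 0 then 1 - w 0 - w 1 else w 0 + w 1 - 1)
    else (if p = 0 then w 0 - w 1 else -w 0 + w 1)


open Filter Topology in
private lemma key (v r : ℝ) (hv : v ≤ 0) (h : v = 0 → r = 0) :
    ∀ᶠ t : ℝ in 𝓝 0, v + t * r ≤ 0 := by
  rcases hv.lt_or_eq with h0 | h0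
  · have hc : Tendsto (fun t : ℝ => v + t * r) (𝓝 0) (𝓝 v) := by
      have h2 : Tendsto (fun t : ℝ => t * r) (𝓝 0) (𝓝 0) := by
        simpa using (continuous_mul_right r).tendsto (0:ℝ)
      simpa using tendsto_const_nhds.add h2
    exact (hc.eventually_lt_const h0).mono fun t ht => ht.le
  · have hr := h h0
    filter_upwards with t
    simp [hr, h0]

section Nlemmas

/-- impossibility lemmas -/
private lemma N1 {L lb0 lb1 l0 c0 a b : ℝ} (hlb1 : 0 < lb1) (hK : lb0 + lb1 < L)
    (hab : a + b ≤ 1)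
    (tA0 : l0/2 + lb1*b = c0) (tB0 : c0 = L - l0/2 - lb1*a) (tD0 : lb0 = l0) : False := by
  nlinarith [mul_le_mul_of_nonneg_left hab hlb1.le]

private lemma N2 {L lb0 lb1 l1 c1 a b : ℝ} (hlb0 : 0 < lb0) (hK : lb0 + lb1 < L)
    (hab : a + b ≤ 1)
    (tA1 : l1/2 + lb0*a = c1) (tB1 : c1 = L - l1/2 - lb0*b) (tD1 : lb1 = l1) : False := by
  nlinarith [mul_le_mul_of_nonneg_left hab hlb0.le]

private lemma N3 {L lb0 lb1 c0 c1 l0 l1 a : ℝ} (hK : lb0 + lb1 < L) (ha : 0 < a)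
    (tC0 : c0 + l0/2 = c1 - l1/2 + L*(1-a)) (tA1 : l1/2 + lb0*a = c1)
    (tB0 : c0 = L - l0/2 - lb1*a) : False := by
  nlinarith [mul_pos (show (0:ℝ) < L - lb0 - lb1 by linarith) ha]

private lemma N4 {L lb0 lb1 c0 c1 l0 l1 a b : ℝ} (hlb1 : 0 < lb1) (hK : lb0 + lb1 < L)
    (ha1 : a < 1) (hab : a + b ≤ 1)
    (tC0 : c0 + l0/2 = c1 - l1/2 + L*(1-a)) (tD0 : lb0 = l0)
    (tA0 : l0/2 + lb1*b = c0) (tA1 : l1/2 + lb0*a = c1) : False := by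
  nlinarith [mul_le_mul_of_nonneg_left (show b ≤ 1 - a by linarith) hlb1.le,
             mul_pos (show (0:ℝ) < L - lb0 - lb1 by linarith)
               (show (0:ℝ) < 1 - a by linarith)]

private lemma N5 {L lb0 lb1 c0 c1 l0 l1 a b : ℝ} (hlb0 : 0 < lb0) (hK : lb0 + lb1 < L)
    (ha1 : a < 1) (hab : a + b ≤ 1)
    (tC0 : c0 + l0/2 = c1 - l1/2 + L*(1-a)) (tB0 : c0 = L - l0/2 - lb1*a)
    (tD1 : lb1 = l1) (tB1 : c1 = L - l1/2 - lb0*b) : False := by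
  nlinarith [mul_le_mul_of_nonneg_left (show b ≤ 1 - a by linarith) hlb0.le,
             mul_pos (show (0:ℝ) < L - lb0 - lb1 by linarith)
               (show (0:ℝ) < 1 - a by linarith)]

private lemma N6 {L lb0 lb1 c0 c1 l0 l1 a b : ℝ} (hL : 0 < L) (hK : lb0 + lb1 < L)
    (hb0 : 0 ≤ b) (hab : a + b ≤ 1)
    (tC0 : c0 + l0/2 = c1 - l1/2 + L*(1-a)) (tD0 : lb0 = l0) (tA0 : l0/2 + lb1*b = c0)
    (tD1 : lb1 = l1) (tB1 : c1 = L - l1/2 - lb0*b) : False := by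
  nlinarith [mul_le_mul_of_nonneg_left (show a ≤ 1 - b by linarith) hL.le,
             mul_pos (show (0:ℝ) < L - lb0 - lb1 by linarith)
               (show (0:ℝ) < 1 + b by linarith)]

private lemma N8 {L lb0 lb1 c0 c1 l0 l1 a b : ℝ} (hlb0 : 0 < lb0) (hK : lb0 + lb1 < L) (ha : 0 < a)
    (hab : a + b ≤ 1) (hA0 : l0/2 + lb1*b ≤ c0)
    (tC1 : c1 + l1/2 = c0 - l0/2 + L*(1-b)) (tD1 : lb1 = l1)
    (tA1 : l1/2 + lb0*a = c1) : False := by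
  nlinarith [mul_le_mul_of_nonneg_left (show a ≤ 1 - b by linarith)
               (show (0:ℝ) ≤ L - lb1 by linarith),
             mul_pos (show (0:ℝ) < L - lb1 - lb0 by linarith) ha]

private lemma N9 {L lb0 lb1 c0 c1 l0 l1 a b : ℝ} (hlb1 : 0 < lb1) (hK : lb0 + lb1 < L)
    (hb1 : b < 1) (hab : a + b ≤ 1) (hB1 : c1 ≤ L - l1/2 - lb0*b)
    (tC1 : c1 + l1/2 = c0 - l0/2 + L*(1-b)) (tD0 : lb0 = l0)
    (tB0 : c0 = L - l0/2 - lb1*a) : False := by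
  nlinarith [mul_le_mul_of_nonneg_left (show a ≤ 1 - b by linarith) hlb1.le,
             mul_pos (show (0:ℝ) < L - lb0 - lb1 by linarith)
               (show (0:ℝ) < 1 - b by linarith)]

private lemma P2a {L lb0 lb1 c0 c1 l0 l1 a b : ℝ} (hlb0 : 0 < lb0) (hlb1 : 0 < lb1) (hK : lb0 + lb1 < L)
    (hab1 : a + b < 1)
    (tA0 : l0/2 + lb1*b = c0) (tC1 : c1 + l1/2 = c0 - l0/2 + L*(1-b))
    (tD1 : lb1 = l1) (tC0 : c0 + l0/2 = c1 - l1/2 + L*(1-a))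
    (tB0 : c0 = L - l0/2 - lb1*a) : False := by
  nlinarith [mul_pos (show (0:ℝ) < L - lb1 by linarith)
               (show (0:ℝ) < 1 - a - b by linarith)]

private lemma P2b {L lb0 lb1 c0 c1 l0 l1 a b : ℝ} (hlb0 : 0 < lb0) (hlb1 : 0 < lb1) (hK : lb0 + lb1 < L)
    (hab1 : a + b < 1)
    (tC0 : c0 + l0/2 = c1 - l1/2 + L*(1-a)) (tC1 : c1 + l1/2 = c0 - l0/2 + L*(1-b))
    (tD0 : lb0 = l0) (tA1 : l1/2 + lb0*a = c1) (tB1 : c1 = L - l1/2 - lb0*b) : False := by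
  nlinarith [mul_pos (show (0:ℝ) < L - lb0 by linarith)
               (show (0:ℝ) < 1 - a - b by linarith)]

private lemma NCYC {L lb0 lb1 c0 c1 l0 l1 a b : ℝ} (hL : 0 < L) (hK : lb0 + lb1 < L)
    (hab : a + b ≤ 1)
    (tC0 : c0 + l0/2 = c1 - l1/2 + L*(1-a)) (tC1 : c1 + l1/2 = c0 - l0/2 + L*(1-b))
    (tD0 : lb0 = l0) (tD1 : lb1 = l1) : False := by
  nlinarith [mul_le_mul_of_nonneg_left hab hL.le]

end Nlemmas

private lemma levels (A0 B0 A1 B1 C0 C1 D0 D1 : Prop)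
    (X1 : ¬(C0 ∧ A1 ∧ B0)) (X2 : ¬(C0 ∧ D0 ∧ A0 ∧ A1)) (X3 : ¬(C1 ∧ D1 ∧ A1))
    (X4 : ¬(C1 ∧ A0 ∧ B1)) (X5 : ¬(C1 ∧ D0 ∧ B0 ∧ B1)) (X6 : ¬(C0 ∧ D1 ∧ B0 ∧ B1))
    (X7 : ¬(C0 ∧ D0 ∧ A0 ∧ D1 ∧ B1)) :
    ∃ E0 F0 E1 F1 : Prop,
      (A0 → E0) ∧ (B0 → F0) ∧ (A1 → ¬E1) ∧ (B1 → ¬F1) ∧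
      (C0 → (E1 ↔ F0)) ∧ (C1 → (E0 ↔ F1)) ∧ (D0 → (E0 ↔ F0)) ∧ (D1 → (E1 ↔ F1)) := by
  refine ⟨A0 ∨ (D0 ∧ B0) ∨ (C1 ∧ D1 ∧ C0 ∧ B0),
          B0 ∨ (D0 ∧ A0) ∨ (C0 ∧ D1 ∧ C1 ∧ A0),
          (C0 ∧ B0) ∨ (C0 ∧ D0 ∧ A0) ∨ (D1 ∧ C1 ∧ A0) ∨ (D1 ∧ C1 ∧ D0 ∧ B0),
          (C1 ∧ A0) ∨ (C1 ∧ D0 ∧ B0) ∨ (D1 ∧ C0 ∧ B0) ∨ (D1 ∧ C0 ∧ D0 ∧ A0),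
          fun h => Or.inl h, fun h => Or.inl h, ?_, ?_, ?_, ?_, ?_, ?_⟩
  · rintro hA1 (⟨h1, h2⟩ | ⟨h1, h2, h3⟩ | ⟨h1, h2, h3⟩ | ⟨h1, h2, h3, h4⟩)
    · exact X1 ⟨h1, hA1, h2⟩
    · exact X2 ⟨h1, h2, h3, hA1⟩
    · exact X3 ⟨h2, h1, hA1⟩
    · exact X3 ⟨h2, h1, hA1⟩
  · rintro hB1 (⟨h1, h2⟩ | ⟨h1, h2, h3⟩ | ⟨h1, h2, h3⟩ | ⟨h1, h2, h3, h4⟩)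
    · exact X4 ⟨h1, h2, hB1⟩
    · exact X5 ⟨h1, h2, h3, hB1⟩
    · exact X6 ⟨h2, h1, h3, hB1⟩
    · exact X7 ⟨h2, h3, h4, h1, hB1⟩
  · intro hC0
    constructor
    · rintro (⟨_, h⟩ | ⟨_, h1, h2⟩ | ⟨h1, h2, h3⟩ | ⟨h1, h2, h3, h4⟩)
      · exact Or.inl h
      · exact Or.inr (Or.inl ⟨h1, h2⟩)
      · exact Or.inr (Or.inr ⟨hC0, h1, h2, h3⟩)
      · exact Or.inl h4
    · rintro (h | ⟨h1, h2⟩ | ⟨h1, h2, h3, h4⟩)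
      · exact Or.inl ⟨hC0, h⟩
      · exact Or.inr (Or.inl ⟨hC0, h1, h2⟩)
      · exact Or.inr (Or.inr (Or.inl ⟨h2, h3, h4⟩))
  · intro hC1
    constructor
    · rintro (h | ⟨h1, h2⟩ | ⟨h1, h2, h3, h4⟩)
      · exact Or.inl ⟨hC1, h⟩
      · exact Or.inr (Or.inl ⟨hC1, h1, h2⟩)
      · exact Or.inr (Or.inr (Or.inl ⟨h2, h3, h4⟩))
    · rintro (⟨_, h⟩ | ⟨_, h1, h2⟩ | ⟨h1, h2, h3⟩ | ⟨h1, h2, h3, h4⟩)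
      · exact Or.inl h
      · exact Or.inr (Or.inl ⟨h1, h2⟩)
      · exact Or.inr (Or.inr ⟨hC1, h1, h2, h3⟩)
      · exact Or.inl h4
  · intro hD0
    constructor
    · rintro (h | ⟨h1, h2⟩ | ⟨h1, h2, h3, h4⟩)
      · exact Or.inr (Or.inl ⟨hD0, h⟩)
      · exact Or.inl h2
      · exact Or.inl h4
    · rintro (h | ⟨h1, h2⟩ | ⟨h1, h2, h3, h4⟩)
      · exact Or.inr (Or.inl ⟨hD0, h⟩)
      · exact Or.inl h2
      · exact Or.inl h4
  · intro hD1
    constructor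
    · rintro (⟨h1, h2⟩ | ⟨h1, h2, h3⟩ | ⟨h1, h2, h3⟩ | ⟨h1, h2, h3, h4⟩)
      · exact Or.inr (Or.inr (Or.inl ⟨hD1, h1, h2⟩))
      · exact Or.inr (Or.inr (Or.inr ⟨hD1, h1, h2, h3⟩))
      · exact Or.inl ⟨h2, h3⟩
      · exact Or.inr (Or.inl ⟨h2, h3, h4⟩)
    · rintro (⟨h1, h2⟩ | ⟨h1, h2, h3⟩ | ⟨h1, h2, h3⟩ | ⟨h1, h2, h3, h4⟩)
      · exact Or.inr (Or.inr (Or.inl ⟨hD1, h1, h2⟩))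
      · exact Or.inr (Or.inr (Or.inr ⟨hD1, h1, h2, h3⟩))
      · exact Or.inl ⟨h2, h3⟩
      · exact Or.inr (Or.inl ⟨h2, h3, h4⟩)

private abbrev WIT (L lb0 lb1 c0 c1 l0 l1 a b al be : ℝ) : Prop :=
  ∃ E0 F0 E1 F1 : ℝ,
    (l0/2 + lb1*b = c0 → E0 = lb1*be) ∧
    (c0 = L - l0/2 - lb1*a → F0 = -(lb1*al)) ∧
    (l1/2 + lb0*a = c1 → E1 = lb0*al) ∧
    (c1 = L - l1/2 - lb0*b → F1 = -(lb0*be)) ∧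
    (c0 + l0/2 = c1 - l1/2 + L*(1-a) → E1 - F0 = L*al) ∧
    (c1 + l1/2 = c0 - l0/2 + L*(1-b) → E0 - F1 = L*be) ∧
    (lb0 = l0 → E0 = F0) ∧
    (lb1 = l1 → E1 = F1)

private lemma wit_zero (L lb0 lb1 c0 c1 l0 l1 a b : ℝ) :
    WIT L lb0 lb1 c0 c1 l0 l1 a b 0 0 :=
  ⟨0, 0, 0, 0, fun _ => by ring, fun _ => by ring, fun _ => by ring, fun _ => by ring,
    fun _ => by ring, fun _ => by ring, fun _ => rfl, fun _ => rfl⟩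

private lemma wit_neg {L lb0 lb1 c0 c1 l0 l1 a b al be : ℝ}
    (h : WIT L lb0 lb1 c0 c1 l0 l1 a b al be) :
    WIT L lb0 lb1 c0 c1 l0 l1 a b (-al) (-be) := by
  obtain ⟨E0, F0, E1, F1, h1, h2, h3, h4, h5, h6, h7, h8⟩ := h
  exact ⟨-E0, -F0, -E1, -F1,
    fun h => by have := h1 h; linarith, fun h => by have := h2 h; linarith,
    fun h => by have := h3 h; linarith, fun h => by have := h4 h; linarith,
    fun h => by have := h5 h; linarith, fun h => by have := h6 h; linarith,
    fun h => by have := h7 h; linarith, fun h => by have := h8 h; linarith⟩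

private lemma wit_swap {L lb0 lb1 c0 c1 l0 l1 a b al be : ℝ}
    (h : WIT L lb1 lb0 c1 c0 l1 l0 b a be al) :
    WIT L lb0 lb1 c0 c1 l0 l1 a b al be := by
  obtain ⟨E0, F0, E1, F1, h1, h2, h3, h4, h5, h6, h7, h8⟩ := h
  exact ⟨E1, F1, E0, F0, h3, h4, h1, h2, h6, h5, h8, h7⟩

private lemma wit_S1 (L lb0 lb1 c0 c1 l0 l1 a b : ℝ)
    (hlb0 : 0 < lb0) (hlb1 : 0 < lb1) (hK : lb0 + lb1 < L)
    (hA0 : l0/2 + lb1*b ≤ c0) (hB0 : c0 ≤ L - l0/2 - lb1*a)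
    (hA1 : l1/2 + lb0*a ≤ c1) (hB1 : c1 ≤ L - l1/2 - lb0*b)
    (hC0 : c0 + l0/2 ≤ c1 - l1/2 + L*(1-a)) (hC1 : c1 + l1/2 ≤ c0 - l0/2 + L*(1-b))
    (hD0 : lb0 ≤ l0) (hD1 : lb1 ≤ l1)
    (ha : 0 < a) (ha1 : a < 1) (hb : 0 < b) (hb1 : b < 1) (hab : a + b ≤ 1) :
    WIT L lb0 lb1 c0 c1 l0 l1 a b 1 (-1) := by
  classical
  obtain ⟨E0, F0, E1, F1, g1, g2, g3, g4, g5, g6, g7, g8⟩ :=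
    levels (l0/2 + lb1*b = c0) (c0 = L - l0/2 - lb1*a) (l1/2 + lb0*a = c1)
      (c1 = L - l1/2 - lb0*b) (c0 + l0/2 = c1 - l1/2 + L*(1-a))
      (c1 + l1/2 = c0 - l0/2 + L*(1-b)) (lb0 = l0) (lb1 = l1)
      (fun ⟨h1, h2, h3⟩ => N3 hK ha h1 h2 h3)
      (fun ⟨h1, h2, h3, h4⟩ => N4 hlb1 hK ha1 hab h1 h2 h3 h4)
      (fun ⟨h1, h2, h3⟩ => N8 hlb0 hK ha hab hA0 h1 h2 h3)
      (fun ⟨h1, h2, h3⟩ => N3 (by linarith) hb h1 h2 h3)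
      (fun ⟨h1, h2, h3, h4⟩ => N5 hlb1 (by linarith) hb1 (by linarith) h1 h4 h2 h3)
      (fun ⟨h1, h2, h3, h4⟩ => N5 hlb0 hK ha1 hab h1 h3 h2 h4)
      (fun ⟨h1, h2, h3, h4, h5⟩ => N6 (by linarith) hK hb.le hab h1 h2 h3 h4 h5)
  refine ⟨if E0 then -lb1 else lb0 - L, if F0 then -lb1 else lb0 - L,
          if E1 then L - lb1 else lb0, if F1 then L - lb1 else lb0,
          ?_, ?_, ?_, ?_, ?_, ?_, ?_, ?_⟩
  · intro h; rw [if_pos (g1 h)]; ring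
  · intro h; rw [if_pos (g2 h)]; ring
  · intro h; rw [if_neg (g3 h)]; ring
  · intro h; rw [if_neg (g4 h)]; ring
  · intro h
    by_cases hh : F0
    · rw [if_pos ((g5 h).2 hh), if_pos hh]; ring
    · rw [if_neg (fun q => hh ((g5 h).1 q)), if_neg hh]; ring
  · intro h
    by_cases hh : F1
    · rw [if_pos ((g6 h).2 hh), if_pos hh]; ring
    · rw [if_neg (fun q => hh ((g6 h).1 q)), if_neg hh]; ring
  · intro h
    by_cases hh : F0
    · rw [if_pos ((g7 h).2 hh), if_pos hh]
    · rw [if_neg (fun q => hh ((g7 h).1 q)), if_neg hh]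
  · intro h
    by_cases hh : F1
    · rw [if_pos ((g8 h).2 hh), if_pos hh]
    · rw [if_neg (fun q => hh ((g8 h).1 q)), if_neg hh]

private lemma wit_S2 (L lb0 lb1 c0 c1 l0 l1 a b : ℝ)
    (hlb0 : 0 < lb0) (hlb1 : 0 < lb1) (hK : lb0 + lb1 < L)
    (hA0 : l0/2 + lb1*b ≤ c0) (hB0 : c0 ≤ L - l0/2 - lb1*a)
    (hA1 : l1/2 + lb0*a ≤ c1) (hB1 : c1 ≤ L - l1/2 - lb0*b)
    (hC0 : c0 + l0/2 ≤ c1 - l1/2 + L*(1-a)) (hC1 : c1 + l1/2 ≤ c0 - l0/2 + L*(1-b))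
    (hD0 : lb0 ≤ l0) (hD1 : lb1 ≤ l1)
    (ha : 0 < a) (ha1 : a < 1) (hbz : b = 0) :
    WIT L lb0 lb1 c0 c1 l0 l1 a b 1 0 := by
  have hL : 0 < L := by linarith
  have hab : a + b ≤ 1 := by linarith
  have hab1 : a + b < 1 := by linarith
  have hb1 : b < 1 := by linarith
  have hb0 : (0:ℝ) ≤ b := by linarith
  by_cases tC0 : c0 + l0/2 = c1 - l1/2 + L*(1-a) <;>
    by_cases tC1 : c1 + l1/2 = c0 - l0/2 + L*(1-b) <;>
      by_cases tD0 : lb0 = l0 <;>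
        by_cases tD1 : lb1 = l1
  · exact (NCYC hL hK hab tC0 tC1 tD0 tD1).elim
  · by_cases tB0 : c0 = L - l0/2 - lb1*a
    · refine ⟨-lb1, -lb1, L - lb1, -lb1, ?_, ?_, ?_, ?_, ?_, ?_, ?_, ?_⟩
      · exact fun h => (N1 hlb1 hK hab h tB0 tD0).elim
      · exact fun h => by ring
      · exact fun h => (N3 hK ha tC0 h tB0).elim
      · exact fun h => (N9 hlb1 hK hb1 hab hB1 tC1 tD0 tB0).elim
      · exact fun h => by ring
      · exact fun h => by ring
      · exact fun h => by ring
      · exact fun h => absurd h tD1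
    · by_cases tA1 : l1/2 + lb0*a = c1
      · refine ⟨lb0 - L, lb0 - L, lb0, lb0 - L, ?_, ?_, ?_, ?_, ?_, ?_, ?_, ?_⟩
        · exact fun h => (N4 hlb1 hK ha1 hab tC0 tD0 h tA1).elim
        · exact fun h => absurd h tB0
        · exact fun h => by ring
        · exact fun h => (P2b hlb0 hlb1 hK hab1 tC0 tC1 tD0 tA1 h).elim
        · exact fun h => by ring
        · exact fun h => by ring
        · exact fun h => by ring
        · exact fun h => absurd h tD1
      · refine ⟨0, 0, L, 0, ?_, ?_, ?_, ?_, ?_, ?_, ?_, ?_⟩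
        · exact fun h => by ring
        · exact fun h => absurd h tB0
        · exact fun h => absurd h tA1
        · exact fun h => by ring
        · exact fun h => by ring
        · exact fun h => by ring
        · exact fun h => by ring
        · exact fun h => absurd h tD1
  · by_cases tB0 : c0 = L - l0/2 - lb1*a
    · refine ⟨L - lb1, -lb1, L - lb1, L - lb1, ?_, ?_, ?_, ?_, ?_, ?_, ?_, ?_⟩
      · exact fun h => (P2a hlb0 hlb1 hK hab1 h tC1 tD1 tC0 tB0).elim
      · exact fun h => by ring
      · exact fun h => (N3 hK ha tC0 h tB0).elim
      · exact fun h => (N5 hlb0 hK ha1 hab tC0 tB0 tD1 h).elim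
      · exact fun h => by ring
      · exact fun h => by ring
      · exact fun h => absurd h tD0
      · exact fun h => by ring
    · by_cases tA1 : l1/2 + lb0*a = c1
      · refine ⟨lb0, lb0 - L, lb0, lb0, ?_, ?_, ?_, ?_, ?_, ?_, ?_, ?_⟩
        · exact fun h => (N8 hlb0 hK ha hab hA0 tC1 tD1 tA1).elim
        · exact fun h => absurd h tB0
        · exact fun h => by ring
        · exact fun h => (N2 hlb0 hK hab tA1 h tD1).elim
        · exact fun h => by ring
        · exact fun h => by ring
        · exact fun h => absurd h tD0
        · exact fun h => by ring
      · refine ⟨0, -L, 0, 0, ?_, ?_, ?_, ?_, ?_, ?_, ?_, ?_⟩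
        · exact fun h => by ring
        · exact fun h => absurd h tB0
        · exact fun h => absurd h tA1
        · exact fun h => by ring
        · exact fun h => by ring
        · exact fun h => by ring
        · exact fun h => absurd h tD0
        · exact fun h => by ring
  · by_cases tB0 : c0 = L - l0/2 - lb1*a
    · refine ⟨0, -lb1, L - lb1, 0, ?_, ?_, ?_, ?_, ?_, ?_, ?_, ?_⟩
      · exact fun h => by ring
      · exact fun h => by ring
      · exact fun h => (N3 hK ha tC0 h tB0).elim
      · exact fun h => by ring
      · exact fun h => by ring
      · exact fun h => by ring
      · exact fun h => absurd h tD0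
      · exact fun h => absurd h tD1
    · refine ⟨0, lb0 - L, lb0, 0, ?_, ?_, ?_, ?_, ?_, ?_, ?_, ?_⟩
      · exact fun h => by ring
      · exact fun h => absurd h tB0
      · exact fun h => by ring
      · exact fun h => by ring
      · exact fun h => by ring
      · exact fun h => by ring
      · exact fun h => absurd h tD0
      · exact fun h => absurd h tD1
  · by_cases tA0 : l0/2 + lb1*b = c0
    · refine ⟨0, 0, L, L, ?_, ?_, ?_, ?_, ?_, ?_, ?_, ?_⟩
      · exact fun h => by ring
      · exact fun h => (N1 hlb1 hK hab tA0 h tD0).elim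
      · exact fun h => (N4 hlb1 hK ha1 hab tC0 tD0 tA0 h).elim
      · exact fun h => (N6 hL hK hb0 hab tC0 tD0 tA0 tD1 h).elim
      · exact fun h => by ring
      · exact fun h => absurd h tC1
      · exact fun h => by ring
      · exact fun h => by ring
    · by_cases tB0 : c0 = L - l0/2 - lb1*a
      · refine ⟨-lb1, -lb1, L - lb1, L - lb1, ?_, ?_, ?_, ?_, ?_, ?_, ?_, ?_⟩
        · exact fun h => absurd h tA0
        · exact fun h => by ring
        · exact fun h => (N3 hK ha tC0 h tB0).elim
        · exact fun h => (N5 hlb0 hK ha1 hab tC0 tB0 tD1 h).elim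
        · exact fun h => by ring
        · exact fun h => absurd h tC1
        · exact fun h => by ring
        · exact fun h => by ring
      · by_cases tA1 : l1/2 + lb0*a = c1
        · refine ⟨lb0 - L, lb0 - L, lb0, lb0, ?_, ?_, ?_, ?_, ?_, ?_, ?_, ?_⟩
          · exact fun h => absurd h tA0
          · exact fun h => absurd h tB0
          · exact fun h => by ring
          · exact fun h => (N2 hlb0 hK hab tA1 h tD1).elim
          · exact fun h => by ring
          · exact fun h => absurd h tC1
          · exact fun h => by ring
          · exact fun h => by ring
        · by_cases tB1 : c1 = L - l1/2 - lb0*b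
          · refine ⟨-L, -L, 0, 0, ?_, ?_, ?_, ?_, ?_, ?_, ?_, ?_⟩
            · exact fun h => absurd h tA0
            · exact fun h => absurd h tB0
            · exact fun h => absurd h tA1
            · exact fun h => by ring
            · exact fun h => by ring
            · exact fun h => absurd h tC1
            · exact fun h => by ring
            · exact fun h => by ring
          · refine ⟨0, 0, L, L, ?_, ?_, ?_, ?_, ?_, ?_, ?_, ?_⟩
            · exact fun h => absurd h tA0
            · exact fun h => absurd h tB0
            · exact fun h => absurd h tA1
            · exact fun h => absurd h tB1
            · exact fun h => by ring
            · exact fun h => absurd h tC1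
            · exact fun h => by ring
            · exact fun h => by ring
  · by_cases tA0 : l0/2 + lb1*b = c0
    · refine ⟨0, 0, L, 0, ?_, ?_, ?_, ?_, ?_, ?_, ?_, ?_⟩
      · exact fun h => by ring
      · exact fun h => (N1 hlb1 hK hab tA0 h tD0).elim
      · exact fun h => (N4 hlb1 hK ha1 hab tC0 tD0 tA0 h).elim
      · exact fun h => by ring
      · exact fun h => by ring
      · exact fun h => absurd h tC1
      · exact fun h => by ring
      · exact fun h => absurd h tD1
    · by_cases tB0 : c0 = L - l0/2 - lb1*a
      · refine ⟨-lb1, -lb1, L - lb1, 0, ?_, ?_, ?_, ?_, ?_, ?_, ?_, ?_⟩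
        · exact fun h => absurd h tA0
        · exact fun h => by ring
        · exact fun h => (N3 hK ha tC0 h tB0).elim
        · exact fun h => by ring
        · exact fun h => by ring
        · exact fun h => absurd h tC1
        · exact fun h => by ring
        · exact fun h => absurd h tD1
      · by_cases tA1 : l1/2 + lb0*a = c1
        · refine ⟨lb0 - L, lb0 - L, lb0, 0, ?_, ?_, ?_, ?_, ?_, ?_, ?_, ?_⟩
          · exact fun h => absurd h tA0
          · exact fun h => absurd h tB0
          · exact fun h => by ring
          · exact fun h => by ring
          · exact fun h => by ring
          · exact fun h => absurd h tC1
          · exact fun h => by ring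
          · exact fun h => absurd h tD1
        · refine ⟨0, 0, L, 0, ?_, ?_, ?_, ?_, ?_, ?_, ?_, ?_⟩
          · exact fun h => absurd h tA0
          · exact fun h => absurd h tB0
          · exact fun h => absurd h tA1
          · exact fun h => by ring
          · exact fun h => by ring
          · exact fun h => absurd h tC1
          · exact fun h => by ring
          · exact fun h => absurd h tD1
  · by_cases tB0 : c0 = L - l0/2 - lb1*a
    · refine ⟨0, -lb1, L - lb1, L - lb1, ?_, ?_, ?_, ?_, ?_, ?_, ?_, ?_⟩
      · exact fun h => by ring
      · exact fun h => by ring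
      · exact fun h => (N3 hK ha tC0 h tB0).elim
      · exact fun h => (N5 hlb0 hK ha1 hab tC0 tB0 tD1 h).elim
      · exact fun h => by ring
      · exact fun h => absurd h tC1
      · exact fun h => absurd h tD0
      · exact fun h => by ring
    · by_cases tA1 : l1/2 + lb0*a = c1
      · refine ⟨0, lb0 - L, lb0, lb0, ?_, ?_, ?_, ?_, ?_, ?_, ?_, ?_⟩
        · exact fun h => by ring
        · exact fun h => absurd h tB0
        · exact fun h => by ring
        · exact fun h => (N2 hlb0 hK hab tA1 h tD1).elim
        · exact fun h => by ring
        · exact fun h => absurd h tC1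
        · exact fun h => absurd h tD0
        · exact fun h => by ring
      · by_cases tB1 : c1 = L - l1/2 - lb0*b
        · refine ⟨0, -L, 0, 0, ?_, ?_, ?_, ?_, ?_, ?_, ?_, ?_⟩
          · exact fun h => by ring
          · exact fun h => absurd h tB0
          · exact fun h => absurd h tA1
          · exact fun h => by ring
          · exact fun h => by ring
          · exact fun h => absurd h tC1
          · exact fun h => absurd h tD0
          · exact fun h => by ring
        · refine ⟨0, -lb1, L - lb1, L - lb1, ?_, ?_, ?_, ?_, ?_, ?_, ?_, ?_⟩
          · exact fun h => by ring
          · exact fun h => absurd h tB0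
          · exact fun h => absurd h tA1
          · exact fun h => absurd h tB1
          · exact fun h => by ring
          · exact fun h => absurd h tC1
          · exact fun h => absurd h tD0
          · exact fun h => by ring
  · by_cases tB0 : c0 = L - l0/2 - lb1*a
    · refine ⟨0, -lb1, L - lb1, 0, ?_, ?_, ?_, ?_, ?_, ?_, ?_, ?_⟩
      · exact fun h => by ring
      · exact fun h => by ring
      · exact fun h => (N3 hK ha tC0 h tB0).elim
      · exact fun h => by ring
      · exact fun h => by ring
      · exact fun h => absurd h tC1
      · exact fun h => absurd h tD0
      · exact fun h => absurd h tD1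
    · refine ⟨0, lb0 - L, lb0, 0, ?_, ?_, ?_, ?_, ?_, ?_, ?_, ?_⟩
      · exact fun h => by ring
      · exact fun h => absurd h tB0
      · exact fun h => by ring
      · exact fun h => by ring
      · exact fun h => by ring
      · exact fun h => absurd h tC1
      · exact fun h => absurd h tD0
      · exact fun h => absurd h tD1
  · by_cases tB0 : c0 = L - l0/2 - lb1*a
    · refine ⟨-lb1, -lb1, -lb1, -lb1, ?_, ?_, ?_, ?_, ?_, ?_, ?_, ?_⟩
      · exact fun h => (N1 hlb1 hK hab h tB0 tD0).elim
      · exact fun h => by ring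
      · exact fun h => (N8 hlb0 hK ha hab hA0 tC1 tD1 h).elim
      · exact fun h => (N9 hlb1 hK hb1 hab hB1 tC1 tD0 tB0).elim
      · exact fun h => absurd h tC0
      · exact fun h => by ring
      · exact fun h => by ring
      · exact fun h => by ring
    · by_cases tA1 : l1/2 + lb0*a = c1
      · refine ⟨lb0, lb0, lb0, lb0, ?_, ?_, ?_, ?_, ?_, ?_, ?_, ?_⟩
        · exact fun h => (N8 hlb0 hK ha hab hA0 tC1 tD1 tA1).elim
        · exact fun h => absurd h tB0
        · exact fun h => by ring
        · exact fun h => (N2 hlb0 hK hab tA1 h tD1).elim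
        · exact fun h => absurd h tC0
        · exact fun h => by ring
        · exact fun h => by ring
        · exact fun h => by ring
      · refine ⟨0, 0, 0, 0, ?_, ?_, ?_, ?_, ?_, ?_, ?_, ?_⟩
        · exact fun h => by ring
        · exact fun h => absurd h tB0
        · exact fun h => absurd h tA1
        · exact fun h => by ring
        · exact fun h => absurd h tC0
        · exact fun h => by ring
        · exact fun h => by ring
        · exact fun h => by ring
  · by_cases tB0 : c0 = L - l0/2 - lb1*a
    · refine ⟨-lb1, -lb1, lb0, -lb1, ?_, ?_, ?_, ?_, ?_, ?_, ?_, ?_⟩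
      · exact fun h => (N1 hlb1 hK hab h tB0 tD0).elim
      · exact fun h => by ring
      · exact fun h => by ring
      · exact fun h => (N9 hlb1 hK hb1 hab hB1 tC1 tD0 tB0).elim
      · exact fun h => absurd h tC0
      · exact fun h => by ring
      · exact fun h => by ring
      · exact fun h => absurd h tD1
    · refine ⟨0, 0, lb0, 0, ?_, ?_, ?_, ?_, ?_, ?_, ?_, ?_⟩
      · exact fun h => by ring
      · exact fun h => absurd h tB0
      · exact fun h => by ring
      · exact fun h => by ring
      · exact fun h => absurd h tC0
      · exact fun h => by ring
      · exact fun h => by ring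
      · exact fun h => absurd h tD1
  · by_cases tA1 : l1/2 + lb0*a = c1
    · refine ⟨lb0, -lb1, lb0, lb0, ?_, ?_, ?_, ?_, ?_, ?_, ?_, ?_⟩
      · exact fun h => (N8 hlb0 hK ha hab hA0 tC1 tD1 tA1).elim
      · exact fun h => by ring
      · exact fun h => by ring
      · exact fun h => (N2 hlb0 hK hab tA1 h tD1).elim
      · exact fun h => absurd h tC0
      · exact fun h => by ring
      · exact fun h => absurd h tD0
      · exact fun h => by ring
    · refine ⟨0, -lb1, 0, 0, ?_, ?_, ?_, ?_, ?_, ?_, ?_, ?_⟩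
      · exact fun h => by ring
      · exact fun h => by ring
      · exact fun h => absurd h tA1
      · exact fun h => by ring
      · exact fun h => absurd h tC0
      · exact fun h => by ring
      · exact fun h => absurd h tD0
      · exact fun h => by ring
  · refine ⟨0, -lb1, lb0, 0, ?_, ?_, ?_, ?_, ?_, ?_, ?_, ?_⟩
    · exact fun h => by ring
    · exact fun h => by ring
    · exact fun h => by ring
    · exact fun h => by ring
    · exact fun h => absurd h tC0
    · exact fun h => by ring
    · exact fun h => absurd h tD0
    · exact fun h => absurd h tD1
  · by_cases tB0 : c0 = L - l0/2 - lb1*a <;> by_cases tA1 : l1/2 + lb0*a = c1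
    · refine ⟨-lb1, -lb1, lb0, lb0, ?_, ?_, ?_, ?_, ?_, ?_, ?_, ?_⟩
      · exact fun h => (N1 hlb1 hK hab h tB0 tD0).elim
      · exact fun h => by ring
      · exact fun h => by ring
      · exact fun h => (N2 hlb0 hK hab tA1 h tD1).elim
      · exact fun h => absurd h tC0
      · exact fun h => absurd h tC1
      · exact fun h => by ring
      · exact fun h => by ring
    · refine ⟨-lb1, -lb1, 0, 0, ?_, ?_, ?_, ?_, ?_, ?_, ?_, ?_⟩
      · exact fun h => (N1 hlb1 hK hab h tB0 tD0).elim
      · exact fun h => by ring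
      · exact fun h => absurd h tA1
      · exact fun h => by ring
      · exact fun h => absurd h tC0
      · exact fun h => absurd h tC1
      · exact fun h => by ring
      · exact fun h => by ring
    · refine ⟨0, 0, lb0, lb0, ?_, ?_, ?_, ?_, ?_, ?_, ?_, ?_⟩
      · exact fun h => by ring
      · exact fun h => absurd h tB0
      · exact fun h => by ring
      · exact fun h => (N2 hlb0 hK hab tA1 h tD1).elim
      · exact fun h => absurd h tC0
      · exact fun h => absurd h tC1
      · exact fun h => by ring
      · exact fun h => by ring
    · refine ⟨0, 0, 0, 0, ?_, ?_, ?_, ?_, ?_, ?_, ?_, ?_⟩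
      · exact fun h => by ring
      · exact fun h => absurd h tB0
      · exact fun h => absurd h tA1
      · exact fun h => by ring
      · exact fun h => absurd h tC0
      · exact fun h => absurd h tC1
      · exact fun h => by ring
      · exact fun h => by ring
  · by_cases tB0 : c0 = L - l0/2 - lb1*a
    · refine ⟨-lb1, -lb1, lb0, 0, ?_, ?_, ?_, ?_, ?_, ?_, ?_, ?_⟩
      · exact fun h => (N1 hlb1 hK hab h tB0 tD0).elim
      · exact fun h => by ring
      · exact fun h => by ring
      · exact fun h => by ring
      · exact fun h => absurd h tC0
      · exact fun h => absurd h tC1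
      · exact fun h => by ring
      · exact fun h => absurd h tD1
    · refine ⟨0, 0, lb0, 0, ?_, ?_, ?_, ?_, ?_, ?_, ?_, ?_⟩
      · exact fun h => by ring
      · exact fun h => absurd h tB0
      · exact fun h => by ring
      · exact fun h => by ring
      · exact fun h => absurd h tC0
      · exact fun h => absurd h tC1
      · exact fun h => by ring
      · exact fun h => absurd h tD1
  · by_cases tA1 : l1/2 + lb0*a = c1
    · refine ⟨0, -lb1, lb0, lb0, ?_, ?_, ?_, ?_, ?_, ?_, ?_, ?_⟩
      · exact fun h => by ring
      · exact fun h => by ring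
      · exact fun h => by ring
      · exact fun h => (N2 hlb0 hK hab tA1 h tD1).elim
      · exact fun h => absurd h tC0
      · exact fun h => absurd h tC1
      · exact fun h => absurd h tD0
      · exact fun h => by ring
    · refine ⟨0, -lb1, 0, 0, ?_, ?_, ?_, ?_, ?_, ?_, ?_, ?_⟩
      · exact fun h => by ring
      · exact fun h => by ring
      · exact fun h => absurd h tA1
      · exact fun h => by ring
      · exact fun h => absurd h tC0
      · exact fun h => absurd h tC1
      · exact fun h => absurd h tD0
      · exact fun h => by ring
  · refine ⟨0, -lb1, lb0, 0, ?_, ?_, ?_, ?_, ?_, ?_, ?_, ?_⟩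
    · exact fun h => by ring
    · exact fun h => by ring
    · exact fun h => by ring
    · exact fun h => by ring
    · exact fun h => absurd h tC0
    · exact fun h => absurd h tC1
    · exact fun h => absurd h tD0
    · exact fun h => absurd h tD1

private lemma glue (L : Fin 2 → ℝ) (lb : Fin 2 → Fin 2 → ℝ)
    (c l u du : Vec2)
    (h0 : WIT (L 0) (lb 0 0) (lb 0 1) (c 0 0) (c 0 1) (l 0 0) (l 0 1)
        (u 0 0) (u 0 1) (du 0 0) (du 0 1))
    (h1 : WIT (L 1) (lb 1 0) (lb 1 1) (c 1 0) (c 1 1) (l 1 0) (l 1 1)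
        (u 1 0) (u 1 1) (du 1 0) (du 1 1))
    (hdsum : du 0 0 + du 0 1 + du 1 0 + du 1 1 = 0)
    (hz : ∀ s p : Fin 2, (u s p = 0 ∨ u s p = 1) → du s p = 0)
    (hne : du ≠ 0) :
    (c, l, u) ∉ Set.extremePoints ℝ {y : Vec2 × Vec2 × Vec2 |
        (∀ s p : Fin 2, y.2.1 s p / 2 + lb s (1 - p) * y.2.2 s (1 - p) ≤ y.1 s p ∧
          y.1 s p ≤ L s - y.2.1 s p / 2 - lb s (1 - p) * y.2.2 s p) ∧
        (∀ s p : Fin 2, y.1 s p + y.2.1 s p / 2 ≤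
          y.1 s (1 - p) - y.2.1 s (1 - p) / 2 + L s * (1 - y.2.2 s p)) ∧
        (∀ s p : Fin 2, lb s p ≤ y.2.1 s p) ∧
        y.2.2 0 0 + y.2.2 0 1 + y.2.2 1 0 + y.2.2 1 1 = 1 ∧
        (∀ s p : Fin 2, 0 ≤ y.2.2 s p ∧ y.2.2 s p ≤ 1)} := by
  intro hx
  obtain ⟨hAB, hC, hD, husum, hub⟩ := hx.1
  have hAB : ∀ s p : Fin 2, l s p / 2 + lb s (1 - p) * u s (1 - p) ≤ c s p ∧
      c s p ≤ L s - l s p / 2 - lb s (1 - p) * u s p := hAB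
  have hC : ∀ s p : Fin 2, c s p + l s p / 2 ≤
      c s (1 - p) - l s (1 - p) / 2 + L s * (1 - u s p) := hC
  have hD : ∀ s p : Fin 2, lb s p ≤ l s p := hD
  have husum : u 0 0 + u 0 1 + u 1 0 + u 1 1 = 1 := husum
  have hub : ∀ s p : Fin 2, 0 ≤ u s p ∧ u s p ≤ 1 := hub
  obtain ⟨E00, F00, E01, F01, w1, w2, w3, w4, w5, w6, w7, w8⟩ := h0
  obtain ⟨E10, F10, E11, F11, v1, v2, v3, v4, v5, v6, v7, v8⟩ := h1
  set dc : Vec2 := ![![(E00+F00)/2, (E01+F01)/2], ![(E10+F10)/2, (E11+F11)/2]] with hdc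
  set dl : Vec2 := ![![F00-E00, F01-E01], ![F10-E10, F11-E11]] with hdl
  set d : Vec2 × Vec2 × Vec2 := (dc, dl, du) with hd
  have eA00 : ∀ᶠ t in nhds (0:ℝ),
      (l 0 0 + t * (F00 - E00))/2 + lb 0 1 * (u 0 1 + t * (du 0 1)) ≤ c 0 0 + t * ((E00+F00)/2) := by
    have hk := key (l 0 0/2 + lb 0 1 * u 0 1 - c 0 0) (lb 0 1 * (du 0 1) - E00)
      (by linarith [(show l 0 0 / 2 + lb 0 1 * u 0 1 ≤ c 0 0 from (hAB 0 0).1)]) (fun hq => by have := w1 (by linarith); linarith)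
    filter_upwards [hk] with t ht; linarith
  have eA01 : ∀ᶠ t in nhds (0:ℝ),
      (l 0 1 + t * (F01 - E01))/2 + lb 0 0 * (u 0 0 + t * (du 0 0)) ≤ c 0 1 + t * ((E01+F01)/2) := by
    have hk := key (l 0 1/2 + lb 0 0 * u 0 0 - c 0 1) (lb 0 0 * (du 0 0) - E01)
      (by linarith [(show l 0 1 / 2 + lb 0 0 * u 0 0 ≤ c 0 1 from (hAB 0 1).1)]) (fun hq => by have := w3 (by linarith); linarith)
    filter_upwards [hk] with t ht; linarith
  have eB00 : ∀ᶠ t in nhds (0:ℝ),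
      c 0 0 + t * ((E00+F00)/2) ≤ L 0 - (l 0 0 + t * (F00 - E00))/2 - lb 0 1 * (u 0 0 + t * (du 0 0)) := by
    have hk := key (c 0 0 - (L 0 - l 0 0/2 - lb 0 1 * u 0 0)) (F00 + lb 0 1 * (du 0 0))
      (by linarith [(show c 0 0 ≤ L 0 - l 0 0 / 2 - lb 0 1 * u 0 0 from (hAB 0 0).2)]) (fun hq => by have := w2 (by linarith); linarith)
    filter_upwards [hk] with t ht; linarith
  have eB01 : ∀ᶠ t in nhds (0:ℝ),
      c 0 1 + t * ((E01+F01)/2) ≤ L 0 - (l 0 1 + t * (F01 - E01))/2 - lb 0 0 * (u 0 1 + t * (du 0 1)) := by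
    have hk := key (c 0 1 - (L 0 - l 0 1/2 - lb 0 0 * u 0 1)) (F01 + lb 0 0 * (du 0 1))
      (by linarith [(show c 0 1 ≤ L 0 - l 0 1 / 2 - lb 0 0 * u 0 1 from (hAB 0 1).2)]) (fun hq => by have := w4 (by linarith); linarith)
    filter_upwards [hk] with t ht; linarith
  have eC00 : ∀ᶠ t in nhds (0:ℝ),
      (c 0 0 + t * ((E00+F00)/2)) + (l 0 0 + t * (F00 - E00))/2 ≤
        (c 0 1 + t * ((E01+F01)/2)) - (l 0 1 + t * (F01 - E01))/2 + L 0 * (1 - (u 0 0 + t * (du 0 0))) := by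
    have hk := key (c 0 0 + l 0 0/2 - (c 0 1 - l 0 1/2 + L 0 * (1 - u 0 0))) (F00 - E01 + L 0 * (du 0 0))
      (by linarith [(show c 0 0 + l 0 0 / 2 ≤ c 0 1 - l 0 1 / 2 + L 0 * (1 - u 0 0) from hC 0 0)]) (fun hq => by have := w5 (by linarith); linarith)
    filter_upwards [hk] with t ht; linarith
  have eC01 : ∀ᶠ t in nhds (0:ℝ),
      (c 0 1 + t * ((E01+F01)/2)) + (l 0 1 + t * (F01 - E01))/2 ≤
        (c 0 0 + t * ((E00+F00)/2)) - (l 0 0 + t * (F00 - E00))/2 + L 0 * (1 - (u 0 1 + t * (du 0 1))) := by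
    have hk := key (c 0 1 + l 0 1/2 - (c 0 0 - l 0 0/2 + L 0 * (1 - u 0 1))) (F01 - E00 + L 0 * (du 0 1))
      (by linarith [(show c 0 1 + l 0 1 / 2 ≤ c 0 0 - l 0 0 / 2 + L 0 * (1 - u 0 1) from hC 0 1)]) (fun hq => by have := w6 (by linarith); linarith)
    filter_upwards [hk] with t ht; linarith
  have eD00 : ∀ᶠ t in nhds (0:ℝ), lb 0 0 ≤ l 0 0 + t * (F00 - E00) := by
    have hk := key (lb 0 0 - l 0 0) (E00 - F00)
      (by linarith [hD 0 0]) (fun hq => by have := w7 (by linarith); linarith)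
    filter_upwards [hk] with t ht; linarith
  have eD01 : ∀ᶠ t in nhds (0:ℝ), lb 0 1 ≤ l 0 1 + t * (F01 - E01) := by
    have hk := key (lb 0 1 - l 0 1) (E01 - F01)
      (by linarith [hD 0 1]) (fun hq => by have := w8 (by linarith); linarith)
    filter_upwards [hk] with t ht; linarith
  have eU00 : ∀ᶠ t in nhds (0:ℝ),
      0 ≤ u 0 0 + t * (du 0 0) ∧ u 0 0 + t * (du 0 0) ≤ 1 := by
    have hk1 := key (-(u 0 0)) (-(du 0 0))
      (by linarith [(hub 0 0).1]) (fun hq => by have := hz 0 0 (Or.inl (by linarith)); linarith)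
    have hk2 := key (u 0 0 - 1) (du 0 0)
      (by linarith [(hub 0 0).2]) (fun hq => by have := hz 0 0 (Or.inr (by linarith)); linarith)
    filter_upwards [hk1, hk2] with t ht1 ht2
    exact ⟨by linarith, by linarith⟩
  have eU01 : ∀ᶠ t in nhds (0:ℝ),
      0 ≤ u 0 1 + t * (du 0 1) ∧ u 0 1 + t * (du 0 1) ≤ 1 := by
    have hk1 := key (-(u 0 1)) (-(du 0 1))
      (by linarith [(hub 0 1).1]) (fun hq => by have := hz 0 1 (Or.inl (by linarith)); linarith)
    have hk2 := key (u 0 1 - 1) (du 0 1)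
      (by linarith [(hub 0 1).2]) (fun hq => by have := hz 0 1 (Or.inr (by linarith)); linarith)
    filter_upwards [hk1, hk2] with t ht1 ht2
    exact ⟨by linarith, by linarith⟩
  have eA10 : ∀ᶠ t in nhds (0:ℝ),
      (l 1 0 + t * (F10 - E10))/2 + lb 1 1 * (u 1 1 + t * (du 1 1)) ≤ c 1 0 + t * ((E10+F10)/2) := by
    have hk := key (l 1 0/2 + lb 1 1 * u 1 1 - c 1 0) (lb 1 1 * (du 1 1) - E10)
      (by linarith [(show l 1 0 / 2 + lb 1 1 * u 1 1 ≤ c 1 0 from (hAB 1 0).1)]) (fun hq => by have := v1 (by linarith); linarith)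
    filter_upwards [hk] with t ht; linarith
  have eA11 : ∀ᶠ t in nhds (0:ℝ),
      (l 1 1 + t * (F11 - E11))/2 + lb 1 0 * (u 1 0 + t * (du 1 0)) ≤ c 1 1 + t * ((E11+F11)/2) := by
    have hk := key (l 1 1/2 + lb 1 0 * u 1 0 - c 1 1) (lb 1 0 * (du 1 0) - E11)
      (by linarith [(show l 1 1 / 2 + lb 1 0 * u 1 0 ≤ c 1 1 from (hAB 1 1).1)]) (fun hq => by have := v3 (by linarith); linarith)
    filter_upwards [hk] with t ht; linarith
  have eB10 : ∀ᶠ t in nhds (0:ℝ),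
      c 1 0 + t * ((E10+F10)/2) ≤ L 1 - (l 1 0 + t * (F10 - E10))/2 - lb 1 1 * (u 1 0 + t * (du 1 0)) := by
    have hk := key (c 1 0 - (L 1 - l 1 0/2 - lb 1 1 * u 1 0)) (F10 + lb 1 1 * (du 1 0))
      (by linarith [(show c 1 0 ≤ L 1 - l 1 0 / 2 - lb 1 1 * u 1 0 from (hAB 1 0).2)]) (fun hq => by have := v2 (by linarith); linarith)
    filter_upwards [hk] with t ht; linarith
  have eB11 : ∀ᶠ t in nhds (0:ℝ),
      c 1 1 + t * ((E11+F11)/2) ≤ L 1 - (l 1 1 + t * (F11 - E11))/2 - lb 1 0 * (u 1 1 + t * (du 1 1)) := by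
    have hk := key (c 1 1 - (L 1 - l 1 1/2 - lb 1 0 * u 1 1)) (F11 + lb 1 0 * (du 1 1))
      (by linarith [(show c 1 1 ≤ L 1 - l 1 1 / 2 - lb 1 0 * u 1 1 from (hAB 1 1).2)]) (fun hq => by have := v4 (by linarith); linarith)
    filter_upwards [hk] with t ht; linarith
  have eC10 : ∀ᶠ t in nhds (0:ℝ),
      (c 1 0 + t * ((E10+F10)/2)) + (l 1 0 + t * (F10 - E10))/2 ≤
        (c 1 1 + t * ((E11+F11)/2)) - (l 1 1 + t * (F11 - E11))/2 + L 1 * (1 - (u 1 0 + t * (du 1 0))) := by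
    have hk := key (c 1 0 + l 1 0/2 - (c 1 1 - l 1 1/2 + L 1 * (1 - u 1 0))) (F10 - E11 + L 1 * (du 1 0))
      (by linarith [(show c 1 0 + l 1 0 / 2 ≤ c 1 1 - l 1 1 / 2 + L 1 * (1 - u 1 0) from hC 1 0)]) (fun hq => by have := v5 (by linarith); linarith)
    filter_upwards [hk] with t ht; linarith
  have eC11 : ∀ᶠ t in nhds (0:ℝ),
      (c 1 1 + t * ((E11+F11)/2)) + (l 1 1 + t * (F11 - E11))/2 ≤
        (c 1 0 + t * ((E10+F10)/2)) - (l 1 0 + t * (F10 - E10))/2 + L 1 * (1 - (u 1 1 + t * (du 1 1))) := by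
    have hk := key (c 1 1 + l 1 1/2 - (c 1 0 - l 1 0/2 + L 1 * (1 - u 1 1))) (F11 - E10 + L 1 * (du 1 1))
      (by linarith [(show c 1 1 + l 1 1 / 2 ≤ c 1 0 - l 1 0 / 2 + L 1 * (1 - u 1 1) from hC 1 1)]) (fun hq => by have := v6 (by linarith); linarith)
    filter_upwards [hk] with t ht; linarith
  have eD10 : ∀ᶠ t in nhds (0:ℝ), lb 1 0 ≤ l 1 0 + t * (F10 - E10) := by
    have hk := key (lb 1 0 - l 1 0) (E10 - F10)
      (by linarith [hD 1 0]) (fun hq => by have := v7 (by linarith); linarith)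
    filter_upwards [hk] with t ht; linarith
  have eD11 : ∀ᶠ t in nhds (0:ℝ), lb 1 1 ≤ l 1 1 + t * (F11 - E11) := by
    have hk := key (lb 1 1 - l 1 1) (E11 - F11)
      (by linarith [hD 1 1]) (fun hq => by have := v8 (by linarith); linarith)
    filter_upwards [hk] with t ht; linarith
  have eU10 : ∀ᶠ t in nhds (0:ℝ),
      0 ≤ u 1 0 + t * (du 1 0) ∧ u 1 0 + t * (du 1 0) ≤ 1 := by
    have hk1 := key (-(u 1 0)) (-(du 1 0))
      (by linarith [(hub 1 0).1]) (fun hq => by have := hz 1 0 (Or.inl (by linarith)); linarith)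
    have hk2 := key (u 1 0 - 1) (du 1 0)
      (by linarith [(hub 1 0).2]) (fun hq => by have := hz 1 0 (Or.inr (by linarith)); linarith)
    filter_upwards [hk1, hk2] with t ht1 ht2
    exact ⟨by linarith, by linarith⟩
  have eU11 : ∀ᶠ t in nhds (0:ℝ),
      0 ≤ u 1 1 + t * (du 1 1) ∧ u 1 1 + t * (du 1 1) ≤ 1 := by
    have hk1 := key (-(u 1 1)) (-(du 1 1))
      (by linarith [(hub 1 1).1]) (fun hq => by have := hz 1 1 (Or.inl (by linarith)); linarith)
    have hk2 := key (u 1 1 - 1) (du 1 1)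
      (by linarith [(hub 1 1).2]) (fun hq => by have := hz 1 1 (Or.inr (by linarith)); linarith)
    filter_upwards [hk1, hk2] with t ht1 ht2
    exact ⟨by linarith, by linarith⟩
  have hmem : ∀ᶠ t in nhds (0:ℝ), ((c, l, u) + t • d) ∈ {y : Vec2 × Vec2 × Vec2 |
        (∀ s p : Fin 2, y.2.1 s p / 2 + lb s (1 - p) * y.2.2 s (1 - p) ≤ y.1 s p ∧
          y.1 s p ≤ L s - y.2.1 s p / 2 - lb s (1 - p) * y.2.2 s p) ∧
        (∀ s p : Fin 2, y.1 s p + y.2.1 s p / 2 ≤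
          y.1 s (1 - p) - y.2.1 s (1 - p) / 2 + L s * (1 - y.2.2 s p)) ∧
        (∀ s p : Fin 2, lb s p ≤ y.2.1 s p) ∧
        y.2.2 0 0 + y.2.2 0 1 + y.2.2 1 0 + y.2.2 1 1 = 1 ∧
        (∀ s p : Fin 2, 0 ≤ y.2.2 s p ∧ y.2.2 s p ≤ 1)} := by
    filter_upwards [eA00, eA01, eB00, eB01, eC00, eC01, eD00, eD01, eU00, eU01,
      eA10, eA11, eB10, eB11, eC10, eC11, eD10, eD11, eU10, eU11] with t
      hA00 hA01 hB00 hB01 hC00 hC01 hD00 hD01 hU00 hU01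
      hA10 hA11 hB10 hB11 hC10 hC11 hD10 hD11 hU10 hU11
    have hts : t * (du 0 0 + du 0 1 + du 1 0 + du 1 1) = 0 := by rw [hdsum]; ring
    refine ⟨?_, ?_, ?_, ?_, ?_⟩
    · intro s p
      fin_cases s <;> fin_cases p
      · exact ⟨hA00, hB00⟩
      · exact ⟨hA01, hB01⟩
      · exact ⟨hA10, hB10⟩
      · exact ⟨hA11, hB11⟩
    · intro s p
      fin_cases s <;> fin_cases p
      · exact hC00
      · exact hC01
      · exact hC10
      · exact hC11
    · intro s p
      fin_cases s <;> fin_cases p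
      · exact hD00
      · exact hD01
      · exact hD10
      · exact hD11
    · show (u 0 0 + t * du 0 0) + (u 0 1 + t * du 0 1) + (u 1 0 + t * du 1 0)
          + (u 1 1 + t * du 1 1) = 1
      linarith [hts, husum]
    · intro s p
      fin_cases s <;> fin_cases p
      · exact hU00
      · exact hU01
      · exact hU10
      · exact hU11
  obtain ⟨ε, hε, hball⟩ := Metric.eventually_nhds_iff.mp hmem
  have hy0 : ((c, l, u) + (ε/2) • d) ∈ _ := hball (by
    rw [Real.dist_eq]; rw [sub_zero, abs_of_pos (by linarith)]; linarith)
  have hy1 : ((c, l, u) + (-(ε/2)) • d) ∈ _ := hball (by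
    rw [Real.dist_eq]; rw [sub_zero, abs_of_neg (by linarith)]; linarith)
  have hseg : (c, l, u) ∈ openSegment ℝ ((c, l, u) + (ε/2) • d) ((c, l, u) + (-(ε/2)) • d) := by
    refine ⟨1/2, 1/2, by norm_num, by norm_num, by norm_num, ?_⟩
    module
  have heq := hx.2 hy0 hy1 hseg
  have hd0 : (ε/2) • d = 0 := by
    have := heq
    rwa [add_eq_left] at this
  have hdz : d = 0 := by
    rcases smul_eq_zero.mp hd0 with h | h
    · exact absurd h (by positivity)
    · exact h
  exact hne (congrArg (fun z => z.2.2) hdz)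

/-- If `lb^s_i + lb^s_j < L^s` for both directions, every extreme point of
the LP relaxation of the unary formulation has binary `u`; i.e. the unary formulation is
ideal. -/
theorem unary_formulation_ideal (L : Fin 2 → ℝ) (lb : Fin 2 → Fin 2 → ℝ)
    (hL : ∀ s, 0 < L s) (hlb : ∀ s k, 0 < lb s k)
    (hstrict : ∀ s : Fin 2, lb s 0 + lb s 1 < L s) :
    ∀ x ∈ Set.extremePoints ℝ {y : Vec2 × Vec2 × Vec2 |
        (∀ s p : Fin 2, y.2.1 s p / 2 + lb s (1 - p) * y.2.2 s (1 - p) ≤ y.1 s p ∧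
          y.1 s p ≤ L s - y.2.1 s p / 2 - lb s (1 - p) * y.2.2 s p) ∧
        (∀ s p : Fin 2, y.1 s p + y.2.1 s p / 2 ≤
          y.1 s (1 - p) - y.2.1 s (1 - p) / 2 + L s * (1 - y.2.2 s p)) ∧
        (∀ s p : Fin 2, lb s p ≤ y.2.1 s p) ∧
        y.2.2 0 0 + y.2.2 0 1 + y.2.2 1 0 + y.2.2 1 1 = 1 ∧
        (∀ s p : Fin 2, 0 ≤ y.2.2 s p ∧ y.2.2 s p ≤ 1)},
      ∀ s p : Fin 2, x.2.2 s p = 0 ∨ x.2.2 s p = 1 := by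
  intro x hx
  obtain ⟨c, l, u⟩ := x
  obtain ⟨hAB0, hC0', hD0', husum0, hub0⟩ := hx.1
  have hAB : ∀ s p : Fin 2, l s p / 2 + lb s (1 - p) * u s (1 - p) ≤ c s p ∧
      c s p ≤ L s - l s p / 2 - lb s (1 - p) * u s p := hAB0
  have hCc : ∀ s p : Fin 2, c s p + l s p / 2 ≤
      c s (1 - p) - l s (1 - p) / 2 + L s * (1 - u s p) := hC0'
  have hDd : ∀ s p : Fin 2, lb s p ≤ l s p := hD0'
  have husum : u 0 0 + u 0 1 + u 1 0 + u 1 1 = 1 := husum0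
  have hub : ∀ s p : Fin 2, 0 ≤ u s p ∧ u s p ≤ 1 := hub0
  have hbin : ∀ s p : Fin 2, ¬(0 < u s p ∧ u s p < 1) → (u s p = 0 ∨ u s p = 1) := by
    intro s p h
    rcases lt_or_eq_of_le (hub s p).1 with h1 | h1
    · rcases lt_or_eq_of_le (hub s p).2 with h2 | h2
      · exact absurd ⟨h1, h2⟩ h
      · exact Or.inr h2
    · exact Or.inl h1.symm
  by_contra hcon
  push_neg at hcon
  obtain ⟨s, p, hsp1, hsp2⟩ := hcon
  have hxf : (0 < u 0 0 ∧ u 0 0 < 1) ∨ (0 < u 0 1 ∧ u 0 1 < 1) ∨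
      (0 < u 1 0 ∧ u 1 0 < 1) ∨ (0 < u 1 1 ∧ u 1 1 < 1) := by
    have hf : 0 < u s p ∧ u s p < 1 := ⟨(hub s p).1.lt_of_ne (Ne.symm hsp1), (hub s p).2.lt_of_ne hsp2⟩
    fin_cases s <;> fin_cases p <;> tauto
  by_cases f00 : 0 < u 0 0 ∧ u 0 0 < 1
  · by_cases f01 : 0 < u 0 1 ∧ u 0 1 < 1
    · -- S1 in direction 0
      refine glue L lb c l u ![![1, -1], ![0, 0]] (wit_S1 (L 0) (lb 0 0) (lb 0 1) (c 0 0) (c 0 1) (l 0 0) (l 0 1) (u 0 0) (u 0 1) (hlb 0 0) (hlb 0 1) (hstrict 0) (hAB 0 0).1 (hAB 0 0).2 (hAB 0 1).1 (hAB 0 1).2 (hCc 0 0) (hCc 0 1) (hDd 0 0) (hDd 0 1) f00.1 f00.2 f01.1 f01.2 (by linarith [(hub 1 0).1, (hub 1 1).1])) (wit_zero (L 1) (lb 1 0) (lb 1 1) (c 1 0) (c 1 1) (l 1 0) (l 1 1) (u 1 0) (u 1 1)) ?_ ?_ ?_ hx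
      · show (1:ℝ) + (-1) + 0 + 0 = 0; norm_num
      · intro s p hp
        fin_cases s <;> fin_cases p
        · exact absurd hp (by rintro (h | h); exacts [ne_of_gt f00.1 h, ne_of_lt f00.2 h])
        · exact absurd hp (by rintro (h | h); exacts [ne_of_gt f01.1 h, ne_of_lt f01.2 h])
        · rfl
        · rfl
      · intro h; have h0 := congrFun (congrFun h 0) 0; simp at h0
    · by_cases f10 : 0 < u 1 0 ∧ u 1 0 < 1
      · by_cases f11 : 0 < u 1 1 ∧ u 1 1 < 1
        · -- S1 in direction 1
          refine glue L lb c l u ![![0, 0], ![1, -1]] (wit_zero (L 0) (lb 0 0) (lb 0 1) (c 0 0) (c 0 1) (l 0 0) (l 0 1) (u 0 0) (u 0 1)) (wit_S1 (L 1) (lb 1 0) (lb 1 1) (c 1 0) (c 1 1) (l 1 0) (l 1 1) (u 1 0) (u 1 1) (hlb 1 0) (hlb 1 1) (hstrict 1) (hAB 1 0).1 (hAB 1 0).2 (hAB 1 1).1 (hAB 1 1).2 (hCc 1 0) (hCc 1 1) (hDd 1 0) (hDd 1 1) f10.1 f10.2 f11.1 f11.2 (by linarith [(hub 0 0).1, (hub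 0 1).1])) ?_ ?_ ?_ hx
          · show (0:ℝ) + 0 + 1 + (-1) = 0; norm_num
          · intro s p hp
            fin_cases s <;> fin_cases p
            · rfl
            · rfl
            · exact absurd hp (by rintro (h | h); exacts [ne_of_gt f10.1 h, ne_of_lt f10.2 h])
            · exact absurd hp (by rintro (h | h); exacts [ne_of_gt f11.1 h, ne_of_lt f11.2 h])
          · intro h; have h0 := congrFun (congrFun h 1) 0; simp at h0
        · -- cross 00 10
          have hz01 : u 0 1 = 0 := (hbin 0 1 f01).resolve_right
            (by intro hq; linarith [f00.1, f10.1, (hub 1 1).1])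
          have hz11 : u 1 1 = 0 := (hbin 1 1 f11).resolve_right
            (by intro hq; linarith [f00.1, f10.1, (hub 0 1).1])
          have hW0 := wit_S2 (L 0) (lb 0 0) (lb 0 1) (c 0 0) (c 0 1) (l 0 0) (l 0 1) (u 0 0) (u 0 1) (hlb 0 0) (hlb 0 1) (hstrict 0) (hAB 0 0).1 (hAB 0 0).2 (hAB 0 1).1 (hAB 0 1).2 (hCc 0 0) (hCc 0 1) (hDd 0 0) (hDd 0 1) f00.1 f00.2 hz01
          have hW1' := wit_neg (wit_S2 (L 1) (lb 1 0) (lb 1 1) (c 1 0) (c 1 1) (l 1 0) (l 1 1) (u 1 0) (u 1 1) (hlb 1 0) (hlb 1 1) (hstrict 1) (hAB 1 0).1 (hAB 1 0).2 (hAB 1 1).1 (hAB 1 1).2 (hCc 1 0) (hCc 1 1) (hDd 1 0) (hDd 1 1) f10.1 f10.2 hz11)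
          rw [neg_zero] at hW1'
          refine glue L lb c l u ![![1, 0], ![-1, 0]] hW0 hW1' ?_ ?_ ?_ hx
          · show (1:ℝ) + 0 + (-1) + 0 = 0; norm_num
          · intro s p hp
            fin_cases s <;> fin_cases p
            · exact absurd hp (by rintro (h | h); exacts [ne_of_gt f00.1 h, ne_of_lt f00.2 h])
            · rfl
            · exact absurd hp (by rintro (h | h); exacts [ne_of_gt f10.1 h, ne_of_lt f10.2 h])
            · rfl
          · intro h; have h0 := congrFun (congrFun h 0) 0; simp at h0
      · by_cases f11 : 0 < u 1 1 ∧ u 1 1 < 1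
        · -- cross 00 11
          have hz01 : u 0 1 = 0 := (hbin 0 1 f01).resolve_right
            (by intro hq; linarith [f00.1, f11.1, (hub 1 0).1])
          have hz10 : u 1 0 = 0 := (hbin 1 0 f10).resolve_right
            (by intro hq; linarith [f00.1, f11.1, (hub 0 1).1])
          have hW0 := wit_S2 (L 0) (lb 0 0) (lb 0 1) (c 0 0) (c 0 1) (l 0 0) (l 0 1) (u 0 0) (u 0 1) (hlb 0 0) (hlb 0 1) (hstrict 0) (hAB 0 0).1 (hAB 0 0).2 (hAB 0 1).1 (hAB 0 1).2 (hCc 0 0) (hCc 0 1) (hDd 0 0) (hDd 0 1) f00.1 f00.2 hz01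
          have hW1' := wit_neg (wit_swap (wit_S2 (L 1) (lb 1 1) (lb 1 0) (c 1 1) (c 1 0) (l 1 1) (l 1 0) (u 1 1) (u 1 0) (hlb 1 1) (hlb 1 0) (by linarith [hstrict 1]) (hAB 1 1).1 (hAB 1 1).2 (hAB 1 0).1 (hAB 1 0).2 (hCc 1 1) (hCc 1 0) (hDd 1 1) (hDd 1 0) f11.1 f11.2 hz10))
          rw [neg_zero] at hW1'
          refine glue L lb c l u ![![1, 0], ![0, -1]] hW0 hW1' ?_ ?_ ?_ hx
          · show (1:ℝ) + 0 + 0 + (-1) = 0; norm_num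
          · intro s p hp
            fin_cases s <;> fin_cases p
            · exact absurd hp (by rintro (h | h); exacts [ne_of_gt f00.1 h, ne_of_lt f00.2 h])
            · rfl
            · rfl
            · exact absurd hp (by rintro (h | h); exacts [ne_of_gt f11.1 h, ne_of_lt f11.2 h])
          · intro h; have h0 := congrFun (congrFun h 0) 0; simp at h0
        · -- only 00 fractional: impossible
          rcases hbin 0 1 f01 with h1 | h1 <;>
            rcases hbin 1 0 f10 with h2 | h2 <;>
              rcases hbin 1 1 f11 with h3 | h3 <;>
                linarith [f00.1, f00.2]
  · by_cases f01 : 0 < u 0 1 ∧ u 0 1 < 1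
    · by_cases f10 : 0 < u 1 0 ∧ u 1 0 < 1
      · by_cases f11 : 0 < u 1 1 ∧ u 1 1 < 1
        · -- S1 in direction 1
          refine glue L lb c l u ![![0, 0], ![1, -1]] (wit_zero (L 0) (lb 0 0) (lb 0 1) (c 0 0) (c 0 1) (l 0 0) (l 0 1) (u 0 0) (u 0 1)) (wit_S1 (L 1) (lb 1 0) (lb 1 1) (c 1 0) (c 1 1) (l 1 0) (l 1 1) (u 1 0) (u 1 1) (hlb 1 0) (hlb 1 1) (hstrict 1) (hAB 1 0).1 (hAB 1 0).2 (hAB 1 1).1 (hAB 1 1).2 (hCc 1 0) (hCc 1 1) (hDd 1 0) (hDd 1 1) f10.1 f10.2 f11.1 f11.2 (by linarith [(hub 0 0).1, (hub 0 1).1])) ?_ ?_ ?_ hx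
          · show (0:ℝ) + 0 + 1 + (-1) = 0; norm_num
          · intro s p hp
            fin_cases s <;> fin_cases p
            · rfl
            · rfl
            · exact absurd hp (by rintro (h | h); exacts [ne_of_gt f10.1 h, ne_of_lt f10.2 h])
            · exact absurd hp (by rintro (h | h); exacts [ne_of_gt f11.1 h, ne_of_lt f11.2 h])
          · intro h; have h0 := congrFun (congrFun h 1) 0; simp at h0
        · -- cross 01 10
          have hz00 : u 0 0 = 0 := (hbin 0 0 f00).resolve_right
            (by intro hq; linarith [f01.1, f10.1, (hub 1 1).1])
          have hz11 : u 1 1 = 0 := (hbin 1 1 f11).resolve_right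
            (by intro hq; linarith [f01.1, f10.1, (hub 0 0).1])
          have hW0 := wit_swap (wit_S2 (L 0) (lb 0 1) (lb 0 0) (c 0 1) (c 0 0) (l 0 1) (l 0 0) (u 0 1) (u 0 0) (hlb 0 1) (hlb 0 0) (by linarith [hstrict 0]) (hAB 0 1).1 (hAB 0 1).2 (hAB 0 0).1 (hAB 0 0).2 (hCc 0 1) (hCc 0 0) (hDd 0 1) (hDd 0 0) f01.1 f01.2 hz00)
          have hW1' := wit_neg (wit_S2 (L 1) (lb 1 0) (lb 1 1) (c 1 0) (c 1 1) (l 1 0) (l 1 1) (u 1 0) (u 1 1) (hlb 1 0) (hlb 1 1) (hstrict 1) (hAB 1 0).1 (hAB 1 0).2 (hAB 1 1).1 (hAB 1 1).2 (hCc 1 0) (hCc 1 1) (hDd 1 0) (hDd 1 1) f10.1 f10.2 hz11)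
          rw [neg_zero] at hW1'
          refine glue L lb c l u ![![0, 1], ![-1, 0]] hW0 hW1' ?_ ?_ ?_ hx
          · show (0:ℝ) + 1 + (-1) + 0 = 0; norm_num
          · intro s p hp
            fin_cases s <;> fin_cases p
            · rfl
            · exact absurd hp (by rintro (h | h); exacts [ne_of_gt f01.1 h, ne_of_lt f01.2 h])
            · exact absurd hp (by rintro (h | h); exacts [ne_of_gt f10.1 h, ne_of_lt f10.2 h])
            · rfl
          · intro h; have h0 := congrFun (congrFun h 0) 1; simp at h0
      · by_cases f11 : 0 < u 1 1 ∧ u 1 1 < 1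
        · -- cross 01 11
          have hz00 : u 0 0 = 0 := (hbin 0 0 f00).resolve_right
            (by intro hq; linarith [f01.1, f11.1, (hub 1 0).1])
          have hz10 : u 1 0 = 0 := (hbin 1 0 f10).resolve_right
            (by intro hq; linarith [f01.1, f11.1, (hub 0 0).1])
          have hW0 := wit_swap (wit_S2 (L 0) (lb 0 1) (lb 0 0) (c 0 1) (c 0 0) (l 0 1) (l 0 0) (u 0 1) (u 0 0) (hlb 0 1) (hlb 0 0) (by linarith [hstrict 0]) (hAB 0 1).1 (hAB 0 1).2 (hAB 0 0).1 (hAB 0 0).2 (hCc 0 1) (hCc 0 0) (hDd 0 1) (hDd 0 0) f01.1 f01.2 hz00)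
          have hW1' := wit_neg (wit_swap (wit_S2 (L 1) (lb 1 1) (lb 1 0) (c 1 1) (c 1 0) (l 1 1) (l 1 0) (u 1 1) (u 1 0) (hlb 1 1) (hlb 1 0) (by linarith [hstrict 1]) (hAB 1 1).1 (hAB 1 1).2 (hAB 1 0).1 (hAB 1 0).2 (hCc 1 1) (hCc 1 0) (hDd 1 1) (hDd 1 0) f11.1 f11.2 hz10))
          rw [neg_zero] at hW1'
          refine glue L lb c l u ![![0, 1], ![0, -1]] hW0 hW1' ?_ ?_ ?_ hx
          · show (0:ℝ) + 1 + 0 + (-1) = 0; norm_num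
          · intro s p hp
            fin_cases s <;> fin_cases p
            · rfl
            · exact absurd hp (by rintro (h | h); exacts [ne_of_gt f01.1 h, ne_of_lt f01.2 h])
            · rfl
            · exact absurd hp (by rintro (h | h); exacts [ne_of_gt f11.1 h, ne_of_lt f11.2 h])
          · intro h; have h0 := congrFun (congrFun h 0) 1; simp at h0
        · -- only 01 fractional: impossible
          rcases hbin 0 0 f00 with h1 | h1 <;>
            rcases hbin 1 0 f10 with h2 | h2 <;>
              rcases hbin 1 1 f11 with h3 | h3 <;>
                linarith [f01.1, f01.2]
    · by_cases f10 : 0 < u 1 0 ∧ u 1 0 < 1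
      · by_cases f11 : 0 < u 1 1 ∧ u 1 1 < 1
        · -- S1 in direction 1
          refine glue L lb c l u ![![0, 0], ![1, -1]] (wit_zero (L 0) (lb 0 0) (lb 0 1) (c 0 0) (c 0 1) (l 0 0) (l 0 1) (u 0 0) (u 0 1)) (wit_S1 (L 1) (lb 1 0) (lb 1 1) (c 1 0) (c 1 1) (l 1 0) (l 1 1) (u 1 0) (u 1 1) (hlb 1 0) (hlb 1 1) (hstrict 1) (hAB 1 0).1 (hAB 1 0).2 (hAB 1 1).1 (hAB 1 1).2 (hCc 1 0) (hCc 1 1) (hDd 1 0) (hDd 1 1) f10.1 f10.2 f11.1 f11.2 (by linarith [(hub 0 0).1, (hub 0 1).1])) ?_ ?_ ?_ hx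
          · show (0:ℝ) + 0 + 1 + (-1) = 0; norm_num
          · intro s p hp
            fin_cases s <;> fin_cases p
            · rfl
            · rfl
            · exact absurd hp (by rintro (h | h); exacts [ne_of_gt f10.1 h, ne_of_lt f10.2 h])
            · exact absurd hp (by rintro (h | h); exacts [ne_of_gt f11.1 h, ne_of_lt f11.2 h])
          · intro h; have h0 := congrFun (congrFun h 1) 0; simp at h0
        · -- only 10 fractional: impossible
          rcases hbin 0 0 f00 with h1 | h1 <;>
            rcases hbin 0 1 f01 with h2 | h2 <;>
              rcases hbin 1 1 f11 with h3 | h3 <;>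
                linarith [f10.1, f10.2]
      · by_cases f11 : 0 < u 1 1 ∧ u 1 1 < 1
        · -- only 11 fractional: impossible
          rcases hbin 0 0 f00 with h1 | h1 <;>
            rcases hbin 0 1 f01 with h2 | h2 <;>
              rcases hbin 1 0 f10 with h3 | h3 <;>
                linarith [f11.1, f11.2]
        · -- none fractional: contradiction with hxf
          rcases hxf with h | h | h | h
          exacts [f00 h, f01 h, f10 h, f11 h]
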